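/- Let K be the finite field with 16 elements. If W is any Weierstrass curve over K which is an elliptic curve (nonzero discriminant) and whose total number of K-rational points, including the point at infinity, equals 25, then W is isomorphic over K, via an admissible change of Weierstrass variables (x, y) ↦ (u²x + r, u³y + u²sx + t) with u ≠ 0, to the curve Y² + Y = X³ + X². That is, there is only one K-isomorphism class of F₁₆-maximal elliptic curves. -/

import Mathlib

/-! Auxiliary development: a concrete model of the field with 16 elements,
together with counting and normal-form lemmas for Weierstrass curves over it. -/

/-- Carry-less multiplication in GF(2)[x]/(x⁴+x+1) on nibble-encoded polynomials. -/
def nmulF16 (a b : Nat) : Nat :=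
  let p1 := if (b &&& 1) = 0 then 0 else a
  let p2 := if (b &&& 2) = 0 then 0 else a <<< 1
  let p3 := if (b &&& 4) = 0 then 0 else a <<< 2
  let p4 := if (b &&& 8) = 0 then 0 else a <<< 3
  let p := p1 ^^^ p2 ^^^ p3 ^^^ p4
  let p := if (p &&& 64) = 0 then p else p ^^^ 76
  let p := if (p &&& 32) = 0 then p else p ^^^ 38
  if (p &&& 16) = 0 then p else p ^^^ 19

/-- The field with 16 elements, concretely. -/
structure F16 where
  val : Fin 16
deriving DecidableEq, Fintype

namespace F16

lemma axor_lt : ∀ a b : Fin 16, (a.val ^^^ b.val) < 16 := by decide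

lemma nmul_lt : ∀ a b : Fin 16, nmulF16 a.val b.val < 16 := by decide

instance : Zero F16 := ⟨⟨0⟩⟩
instance : One F16 := ⟨⟨1⟩⟩
instance : Add F16 := ⟨fun a b => ⟨⟨a.val.val ^^^ b.val.val, axor_lt a.val b.val⟩⟩⟩
instance : Neg F16 := ⟨fun a => a⟩
instance : Mul F16 := ⟨fun a b => ⟨⟨nmulF16 a.val.val b.val.val, nmul_lt a.val b.val⟩⟩⟩
instance : Inv F16 :=
  ⟨fun a => (a*a) * (a*a) * ((a*a)*(a*a)) * ((a*a)*((a*a)*(a*a)))⟩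

lemma hadd_assoc : ∀ a b c : F16, (a+b)+c = a+(b+c) := by decide
lemma hzero_add : ∀ a : F16, 0+a = a := by decide
lemma hadd_zero : ∀ a : F16, a+0 = a := by decide
lemma hadd_comm : ∀ a b : F16, a+b = b+a := by decide
lemma hneg_add : ∀ a : F16, -a+a = 0 := by decide
lemma hmul_assoc : ∀ a b c : F16, (a*b)*c = a*(b*c) := by decide
lemma hone_mul : ∀ a : F16, 1*a = a := by decide
lemma hmul_one : ∀ a : F16, a*1 = a := by decide
lemma hmul_comm : ∀ a b : F16, a*b = b*a := by decide
lemma hleft_distrib : ∀ a b c : F16, a*(b+c) = a*b+a*c := by decide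
lemma hzero_mul : ∀ a : F16, 0*a = 0 := by decide
lemma hmul_zero : ∀ a : F16, a*0 = 0 := by decide
lemma hmul_inv : ∀ a : F16, a ≠ 0 → a * a⁻¹ = 1 := by decide
lemma hinv_zero : (0:F16)⁻¹ = 0 := by decide

instance instCommRing : CommRing F16 where
  nsmul := nsmulRec
  zsmul := zsmulRec
  add_assoc := hadd_assoc
  zero_add := hzero_add
  add_zero := hadd_zero
  add_comm := hadd_comm
  neg_add_cancel := hneg_add
  mul_assoc := hmul_assoc
  one_mul := hone_mul
  mul_one := hmul_one
  mul_comm := hmul_comm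
  left_distrib := hleft_distrib
  right_distrib := fun a b c => by
    rw [hmul_comm (a+b) c, hleft_distrib, hmul_comm c a, hmul_comm c b]
  zero_mul := hzero_mul
  mul_zero := hmul_zero

instance instField : Field F16 where
  exists_pair_ne := ⟨0, 1, by decide⟩
  mul_inv_cancel := hmul_inv
  inv_zero := hinv_zero
  nnqsmul := _
  qsmul := _

lemma card_eq : Fintype.card F16 = 16 := by decide

lemma two_eq_zero : (2 : F16) = 0 := by decide

instance : CharP F16 2 :=
  (CharP.charP_iff_prime_eq_zero (by norm_num)).2 two_eq_zero

/-- Abbreviation for concrete elements. -/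
def c (n : Fin 16) : F16 := ⟨n⟩

end F16

namespace UniqueF16Aux

open WeierstrassCurve WeierstrassCurve.Affine

variable {F : Type} [Field F]

/-- The affine change of coordinates on the plane induced by a variable change. -/
def planeEquiv (C : VariableChange F) : F × F ≃ F × F where
  toFun p := ((C.u : F)^2*p.1 + C.r, (C.u : F)^3*p.2 + (C.u : F)^2*C.s*p.1 + C.t)
  invFun q := (((C.u : F))⁻¹^2*(q.1 - C.r),
    ((C.u : F))⁻¹^3*(q.2 - C.t - C.s*(q.1 - C.r)))
  left_inv p := by
    have hu : (C.u : F) ≠ 0 := C.u.ne_zero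
    ext <;> field_simp <;> ring
  right_inv q := by
    have hu : (C.u : F) ≠ 0 := C.u.ne_zero
    ext <;> field_simp <;> ring

lemma vc_equation_iff (W : WeierstrassCurve F) (C : VariableChange F) (x y : F) :
    (C • W).toAffine.Equation x y ↔
      W.toAffine.Equation ((C.u : F)^2*x + C.r)
        ((C.u : F)^3*y + (C.u : F)^2*C.s*x + C.t) := by
  have hu : (C.u : F) ≠ 0 := C.u.ne_zero
  rw [equation_iff', equation_iff']
  have key : y ^ 2 + (C • W).a₁ * x * y + (C • W).a₃ * y -
      (x ^ 3 + (C • W).a₂ * x ^ 2 + (C • W).a₄ * x +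
        (C • W).a₆) =
      ((C.u : F))⁻¹^6 * (((C.u : F)^3*y + (C.u : F)^2*C.s*x + C.t) ^ 2 +
        W.a₁ * ((C.u : F)^2*x + C.r) * ((C.u : F)^3*y + (C.u : F)^2*C.s*x + C.t) +
        W.a₃ * ((C.u : F)^3*y + (C.u : F)^2*C.s*x + C.t) -
        (((C.u : F)^2*x + C.r) ^ 3 + W.a₂ * ((C.u : F)^2*x + C.r) ^ 2 +
          W.a₄ * ((C.u : F)^2*x + C.r) + W.a₆)) := by
    simp only [variableChange_a₁, variableChange_a₂, variableChange_a₃, variableChange_a₄,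
      variableChange_a₆, Units.val_inv_eq_inv_val]
    field_simp
    ring
  rw [key, mul_eq_zero]
  simp [hu]

lemma natCard_point (W : WeierstrassCurve F) [Finite F] (hΔ : W.Δ ≠ 0) :
    Nat.card W.toAffine.Point =
      1 + Nat.card {p : F × F // W.toAffine.Equation p.1 p.2} := by
  have e : W.toAffine.Point ≃ Option {p : F × F // W.toAffine.Equation p.1 p.2} :=
    { toFun := fun P => match P with
        | .zero => none
        | @Point.some _ _ _ x y h => some ⟨(x, y), h.1⟩
      invFun := fun o => match o with
        | none => .zero
        | some ⟨(x, y), h⟩ => .some _ _ ((W.toAffine.equation_iff_nonsingular_of_Δ_ne_zero hΔ).1 h)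
      left_inv := fun P => by cases P <;> rfl
      right_inv := fun o => by rcases o with _ | ⟨⟨x, y⟩, h⟩ <;> rfl }
  rw [Nat.card_congr e, Finite.card_option, add_comm]

lemma natCard_vc (W : WeierstrassCurve F) [Finite F] (C : VariableChange F) (hΔ : W.Δ ≠ 0) :
    Nat.card (C • W).toAffine.Point = Nat.card W.toAffine.Point := by
  have hΔ' : (C • W).Δ ≠ 0 := by
    rw [variableChange_Δ]
    exact mul_ne_zero (pow_ne_zero _ C.u⁻¹.ne_zero) hΔ
  rw [natCard_point _ hΔ', natCard_point _ hΔ]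
  refine congrArg (1 + ·) ?_
  exact Nat.card_congr <| Equiv.subtypeEquiv (planeEquiv C) fun p => by
    simpa [planeEquiv] using vc_equation_iff W C p.1 p.2

lemma natCard_map {K L : Type} [Field K] [Field L] [Finite K] [Finite L]
    (e : K ≃+* L) (W : WeierstrassCurve K) (hΔ : W.Δ ≠ 0) :
    Nat.card (W.map (e : K →+* L)).toAffine.Point = Nat.card W.toAffine.Point := by
  have hΔ' : (W.map (e : K →+* L)).Δ ≠ 0 := by
    rw [WeierstrassCurve.map_Δ]
    simpa using hΔ
  rw [natCard_point _ hΔ', natCard_point _ hΔ]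
  congr 1
  refine Nat.card_congr <| (Equiv.subtypeEquiv (Equiv.prodCongr e.toEquiv e.toEquiv)
    fun p => ?_).symm
  exact (WeierstrassCurve.Affine.map_equation W e.injective p.1 p.2).symm

end UniqueF16Aux


namespace UniqueF16Aux

open WeierstrassCurve WeierstrassCurve.Affine

/-- The Weierstrass curve `Y² + a₃Y = X³ + a₄X + a₆`. -/
def mkW {F : Type} [Field F] (a₃ a₄ a₆ : F) : WeierstrassCurve F := ⟨0, 0, a₃, a₄, a₆⟩

section Bridges

variable {F : Type} [Field F]

lemma vc_scale (a₃ a₄ a₆ a b : F) (hab : a * b = 1) (hba : b * a = 1) :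
    (⟨Units.mk a b hab hba, 0, 0, 0⟩ : VariableChange F) • (mkW a₃ a₄ a₆) =
      mkW (b*b*b*a₃) (b*b*b*b*a₄) (b*b*b*b*b*b*a₆) := by
  ext <;> simp only [variableChange_def, mkW, Units.inv_mk, Units.val_mk] <;> ring

variable [CharP F 2]

lemma two_zero : (2 : F) = 0 := by
  have := CharP.cast_eq_zero F 2
  exact_mod_cast this

lemma vc_st (a₃ a₄ a₆ s t : F) :
    (⟨1, s*s, s, t⟩ : VariableChange F) • (mkW a₃ a₄ a₆) =
      mkW a₃ (a₄ + s*a₃ + s*s*s*s) (a₆ + s*s*a₄ + s*s*s*s*s*s + t*a₃ + t*t) := by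
  have h2 : (2 : F) = 0 := two_zero
  ext
  · simp only [variableChange_def, mkW, inv_one, Units.val_one]
    linear_combination s*h2
  · simp only [variableChange_def, mkW, inv_one, Units.val_one]
    linear_combination (s^2)*h2
  · simp only [variableChange_def, mkW, inv_one, Units.val_one]
    linear_combination t*h2
  · simp only [variableChange_def, mkW, inv_one, Units.val_one]
    linear_combination (s^4 - s*a₃ - s*t)*h2
  · simp only [variableChange_def, mkW, inv_one, Units.val_one]
    linear_combination (-(t*a₃) - t^2)*h2

end Bridges

lemma card_mkW (a₃ a₄ a₆ : F16) (hΔ : (mkW a₃ a₄ a₆).Δ ≠ 0) :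
    Nat.card (mkW a₃ a₄ a₆).toAffine.Point = 1 + (Finset.univ.filter
      (fun p : F16 × F16 => p.2*p.2 + a₃*p.2 = p.1*p.1*p.1 + a₄*p.1 + a₆)).card := by
  rw [natCard_point _ hΔ]
  congr 1
  have h : ∀ p : F16 × F16, (mkW a₃ a₄ a₆).toAffine.Equation p.1 p.2 ↔
      (p.2*p.2 + a₃*p.2 = p.1*p.1*p.1 + a₄*p.1 + a₆) := by
    intro p
    rw [equation_iff]
    simp only [mkW]
    constructor <;> intro h <;> linear_combination h
  rw [Nat.card_congr (Equiv.subtypeEquivRight h), Nat.card_eq_fintype_card,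
    Fintype.card_subtype]

/-- The number of affine points of `Y² + a₃Y = X³ + a₄X + a₆` over `F16`. -/
def ecount (a₃ a₄ a₆ : F16) : ℕ := (Finset.univ.filter
  (fun p : F16 × F16 => p.2*p.2 + a₃*p.2 = p.1*p.1*p.1 + a₄*p.1 + a₆)).card

lemma card_mkW' (a₃ a₄ a₆ : F16) (hΔ : (mkW a₃ a₄ a₆).Δ ≠ 0) :
    Nat.card (mkW a₃ a₄ a₆).toAffine.Point = 1 + ecount a₃ a₄ a₆ :=
  card_mkW a₃ a₄ a₆ hΔ

open F16 (c) in
lemma sqrt_exists : ∀ x : F16, ∃ y : F16, y*y = x := by decide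

open F16 (c) in
lemma scale_exists : ∀ x : F16, x ≠ 0 → ∃ a b : F16, a*b = 1 ∧ b*a = 1 ∧
    (b*b*b*x = c 1 ∨ b*b*b*x = c 2 ∨ b*b*b*x = c 4) := by decide

open F16 (c) in
lemma s_norm : ∀ a₃ a₄ : F16, (a₃ = c 1 ∨ a₃ = c 2 ∨ a₃ = c 4) → ∃ s : F16,
    (a₃ = c 1 ∧ (a₄ + s*a₃ + s*s*s*s = c 0 ∨ a₄ + s*a₃ + s*s*s*s = c 2 ∨
      a₄ + s*a₃ + s*s*s*s = c 8 ∨ a₄ + s*a₃ + s*s*s*s = c 10)) ∨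
    ((a₃ = c 2 ∨ a₃ = c 4) ∧ a₄ + s*a₃ + s*s*s*s = c 0) := by decide

open F16 (c) in
lemma t_norm : ∀ a₃ a₆ : F16, (a₃ = c 1 ∨ a₃ = c 2 ∨ a₃ = c 4) → ∃ t : F16,
    (a₃ = c 1 ∧ (a₆ + t*a₃ + t*t = c 0 ∨ a₆ + t*a₃ + t*t = c 8)) ∨
    ((a₃ = c 2 ∨ a₃ = c 4) ∧ (a₆ + t*a₃ + t*t = c 0 ∨ a₆ + t*a₃ + t*t = c 1)) := by decide

/-- `2` divides the number of points of an elliptic curve over `F16` with `a₁ ≠ 0`. -/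
lemma two_dvd_card (Wf : WeierstrassCurve F16) (hΔ : Wf.Δ ≠ 0) (h1 : Wf.a₁ ≠ 0) :
    2 ∣ Nat.card Wf.toAffine.Point := by
  have h2 : (2 : F16) = 0 := F16.two_eq_zero
  set x₀ := Wf.a₃ * Wf.a₁⁻¹ with hx₀
  have hinv : Wf.a₁ * Wf.a₁⁻¹ = 1 := mul_inv_cancel₀ h1
  have hx : Wf.a₁ * x₀ = Wf.a₃ := by rw [hx₀]; linear_combination Wf.a₃ * hinv
  obtain ⟨y₀, hy⟩ := sqrt_exists (x₀^3 + Wf.a₂*x₀^2 + Wf.a₄*x₀ + Wf.a₆)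
  have heq : Wf.toAffine.Equation x₀ y₀ := by
    rw [equation_iff]
    linear_combination hy + y₀*hx + Wf.a₃*y₀*h2
  have hns := (Wf.toAffine.equation_iff_nonsingular_of_Δ_ne_zero hΔ).1 heq
  have hP2 : Point.some _ _ hns + Point.some _ _ hns = 0 := by
    refine Point.add_self_of_Y_eq ?_
    rw [Affine.negY]
    linear_combination hx + (y₀ + Wf.a₃)*h2
  haveI : Fact (Nat.Prime 2) := ⟨by norm_num⟩
  have hord : addOrderOf (Point.some _ _ hns) = 2 := by
    refine addOrderOf_eq_prime ?_ (Point.some_ne_zero hns)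
    rw [two_nsmul]
    exact hP2
  exact hord ▸ addOrderOf_dvd_natCard _

open F16 (c) in
lemma count_vals : ecount (c 1) (c 0) (c 0) = 8 ∧ ecount (c 1) (c 0) (c 8) = 24 ∧
    ecount (c 1) (c 2) (c 0) = 16 ∧ ecount (c 1) (c 2) (c 8) = 16 ∧
    ecount (c 1) (c 8) (c 0) = 16 ∧ ecount (c 1) (c 8) (c 8) = 16 ∧
    ecount (c 1) (c 10) (c 0) = 16 ∧ ecount (c 1) (c 10) (c 8) = 16 ∧
    ecount (c 2) (c 0) (c 0) = 20 ∧ ecount (c 2) (c 0) (c 1) = 12 ∧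
    ecount (c 4) (c 0) (c 0) = 20 ∧ ecount (c 4) (c 0) (c 1) = 12 := by
  refine ⟨?_, ?_, ?_, ?_, ?_, ?_, ?_, ?_, ?_, ?_, ?_, ?_⟩ <;> decide

open F16 (c) in
lemma final_step : (⟨1, c 2, c 4, 0⟩ : VariableChange F16) • (mkW (c 1) (c 0) (c 8)) =
    ({ a₁ := 0, a₂ := 1, a₃ := 1, a₄ := 0, a₆ := 0 } : WeierstrassCurve F16) := by
  ext <;> decide

end UniqueF16Aux

open WeierstrassCurve WeierstrassCurve.Affine UniqueF16Aux

/-- Let `K` be the finite field with 16 elements. Any Weierstrass curve over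
`K` with nonzero discriminant and exactly 25 `K`-rational points (including the point at
infinity) is isomorphic over `K`, via an admissible change of Weierstrass variables
`(x, y) ↦ (u²x + r, u³y + u²sx + t)` with `u ≠ 0`, to the curve `Y² + Y = X³ + X²`: there is
only one `K`-isomorphism class of `F₁₆`-maximal elliptic curves. -/
theorem unique_F16_maximal_elliptic_curve
    (K : Type) [Field K] [Fintype K] (hK : Fintype.card K = 16)
    (W : WeierstrassCurve K) (hΔ : W.Δ ≠ 0)
    (hcard : Nat.card W.toAffine.Point = 25) :
    ∃ C : WeierstrassCurve.VariableChange K,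
      C • W =
        { a₁ := 0, a₂ := 1, a₃ := 1, a₄ := 0, a₆ := 0 : WeierstrassCurve K } := by
  classical
  -- transfer to the concrete field `F16`
  have e : K ≃+* F16 := FiniteField.ringEquivOfCardEq (by rw [hK, F16.card_eq])
  set f : K →+* F16 := (e : K →+* F16) with hf
  set W₀ := W.map f with hW₀
  have hΔ₀ : W₀.Δ ≠ 0 := by
    rw [hW₀, WeierstrassCurve.map_Δ]
    exact fun h => hΔ (e.injective (h.trans (map_zero e).symm))
  have hc₀ : Nat.card W₀.toAffine.Point = 25 := by
    rw [hW₀, hf, natCard_map e W hΔ, hcard]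
  -- step 1 : `a₁ = 0`
  have ha₁ : W₀.a₁ = 0 := by
    by_contra h1
    have h := two_dvd_card W₀ hΔ₀ h1
    rw [hc₀] at h
    norm_num at h
  -- step 2 : kill `a₂`
  set C₁ := W₀.toCharTwoJEqZeroNF with hC₁
  have hNF := W₀.toCharTwoJEqZeroNF_spec ha₁
  set W₁ := C₁ • W₀ with hW₁
  have hΔ₁ : W₁.Δ ≠ 0 := by
    rw [hW₁, WeierstrassCurve.variableChange_Δ]
    exact mul_ne_zero (pow_ne_zero _ C₁.u⁻¹.ne_zero) hΔ₀
  have hc₁ : Nat.card W₁.toAffine.Point = 25 := by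
    rw [hW₁, natCard_vc W₀ C₁ hΔ₀, hc₀]
  have h1a : W₁.a₁ = 0 := hNF.a₁
  have h2a : W₁.a₂ = 0 := hNF.a₂
  have ha₃ : W₁.a₃ ≠ 0 := by
    intro h
    apply hΔ₁
    haveI := hNF
    rw [WeierstrassCurve.Δ_of_isCharTwoJEqZeroNF_of_char_two, h]
    norm_num
  have hW₁eq : W₁ = mkW W₁.a₃ W₁.a₄ W₁.a₆ := by
    ext <;> simp [mkW, h1a, h2a]
  -- step 3 : scale `a₃` to a representative
  obtain ⟨a, b, hab, hba, hrep⟩ := scale_exists W₁.a₃ ha₃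
  set C₂ : WeierstrassCurve.VariableChange F16 := ⟨Units.mk a b hab hba, 0, 0, 0⟩ with hC₂
  set W₂ := C₂ • W₁ with hW₂
  have hW₂eq : W₂ = mkW (b*b*b*W₁.a₃) (b*b*b*b*W₁.a₄) (b*b*b*b*b*b*W₁.a₆) := by
    rw [hW₂, hC₂]
    conv_lhs => rw [hW₁eq]
    exact vc_scale _ _ _ a b hab hba
  have hΔ₂ : W₂.Δ ≠ 0 := by
    rw [hW₂, WeierstrassCurve.variableChange_Δ]
    exact mul_ne_zero (pow_ne_zero _ C₂.u⁻¹.ne_zero) hΔ₁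
  have hc₂ : Nat.card W₂.toAffine.Point = 25 := by
    rw [hW₂, natCard_vc W₁ C₂ hΔ₁, hc₁]
  set A := b*b*b*W₁.a₃ with hA
  set V := b*b*b*b*W₁.a₄ with hV
  set U := b*b*b*b*b*b*W₁.a₆ with hU
  -- step 4 : normalize `a₄` and `a₆` by an `(s, t)`-change of variables
  obtain ⟨s, hs⟩ := s_norm A V hrep
  set V' := V + s*A + s*s*s*s with hV'
  obtain ⟨t, ht⟩ := t_norm A (U + s*s*V + s*s*s*s*s*s) hrep
  set U' := U + s*s*V + s*s*s*s*s*s + t*A + t*t with hU'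
  set C₃ : WeierstrassCurve.VariableChange F16 := ⟨1, s*s, s, t⟩ with hC₃
  set W₃ := C₃ • W₂ with hW₃
  have hW₃eq : W₃ = mkW A V' U' := by
    rw [hW₃, hC₃]
    conv_lhs => rw [hW₂eq]
    exact vc_st A V U s t
  have hΔ₃ : W₃.Δ ≠ 0 := by
    rw [hW₃, WeierstrassCurve.variableChange_Δ]
    exact mul_ne_zero (pow_ne_zero _ C₃.u⁻¹.ne_zero) hΔ₂
  have hc₃ : Nat.card W₃.toAffine.Point = 25 := by
    rw [hW₃, natCard_vc W₂ C₃ hΔ₂, hc₂]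
  -- the representative has 24 affine points
  have hΔmk : (mkW A V' U').Δ ≠ 0 := hW₃eq ▸ hΔ₃
  have hcnt : ecount A V' U' = 24 := by
    have h := card_mkW' A V' U' hΔmk
    rw [← hW₃eq, hc₃] at h
    omega
  -- identify the representative
  have hrepAll : A = F16.c 1 ∧ V' = F16.c 0 ∧ U' = F16.c 8 := by
    rcases hs with ⟨hA1, hV4⟩ | ⟨hA24, hV0⟩
    · rcases ht with ⟨-, hU2⟩ | ⟨hA24, -⟩
      · rw [hA1] at hcnt
        rcases hV4 with hV4 | hV4 | hV4 | hV4 <;> rw [hV4] at hcnt <;>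
          rcases hU2 with hU2 | hU2 <;> rw [hU2] at hcnt <;>
            first
              | exact ⟨hA1, hV4, hU2⟩
              | exact absurd hcnt (by decide)
      · rw [hA1] at hA24
        rcases hA24 with h | h <;> exact absurd h (by decide)
    · rcases ht with ⟨hA1, -⟩ | ⟨-, hU2⟩
      · rcases hA24 with h | h <;> rw [h] at hA1 <;> exact absurd hA1 (by decide)
      · exfalso
        rw [hV0] at hcnt
        rcases hA24 with hA2 | hA2 <;> rw [hA2] at hcnt <;>
          rcases hU2 with hU2 | hU2 <;> rw [hU2] at hcnt <;>
            exact absurd hcnt (by decide)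
  obtain ⟨hA1, hV0, hU8⟩ := hrepAll
  -- step 5 : move the representative to the target curve
  set C₄ : WeierstrassCurve.VariableChange F16 := ⟨1, F16.c 2, F16.c 4, 0⟩ with hC₄
  have hfinal : C₄ • W₃ =
      ({ a₁ := 0, a₂ := 1, a₃ := 1, a₄ := 0, a₆ := 0 } : WeierstrassCurve F16) := by
    rw [hW₃eq, hA1, hV0, hU8, hC₄]
    exact final_step
  -- put the chain of variable changes together
  set Call := C₄ * (C₃ * (C₂ * C₁)) with hCall
  have hchain : Call • W₀ =
      ({ a₁ := 0, a₂ := 1, a₃ := 1, a₄ := 0, a₆ := 0 } : WeierstrassCurve F16) := by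
    rw [hCall, mul_smul, mul_smul,
      mul_smul, ← hW₁, ← hW₂, ← hW₃]
    exact hfinal
  -- descend along the ring isomorphism
  refine ⟨Call.map e.symm.toRingHom, ?_⟩
  have hWW : (W.map f).map e.symm.toRingHom = W := by
    have hcomp : e.symm.toRingHom.comp f = RingHom.id K := by
      ext x
      simp [hf]
    rw [WeierstrassCurve.map_map, hcomp, WeierstrassCurve.map_id]
  calc (Call.map e.symm.toRingHom) • W
      = (Call.map e.symm.toRingHom) • ((W.map f).map e.symm.toRingHom) := by
        rw [hWW]
    _ = (Call • (W.map f)).map e.symm.toRingHom :=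
        WeierstrassCurve.map_variableChange _ _ _
    _ = _ := by
        rw [← hW₀, hchain]
        ext <;> simp
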